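/- For the ideal a = (x^d, x^{d-a} y^a, y^d) with d ≥ 2 and a | d, and Q the bounded face of P_a from (d,0) to (0,d): with L_Q(x,y) = (x+y)/d, the set R_Q equals {-k/d : 2 ≤ k ≤ d + a}. -/

import Mathlib

open Set

namespace BS

def toR {n : ℕ} (u : Fin n → ℤ) : Fin n → ℝ := fun i => (u i : ℝ)

def natR {n : ℕ} (u : Fin n → ℕ) : Fin n → ℝ := fun i => (u i : ℝ)

def natZ {n : ℕ} (u : Fin n → ℕ) : Fin n → ℤ := fun i => (u i : ℤ)

/-- `Γ` is the exponent set of a nonzero monomial ideal. -/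
def IsMonIdeal {n : ℕ} (Γ : Set (Fin n → ℕ)) : Prop :=
  Γ.Nonempty ∧ ∀ u ∈ Γ, ∀ w : Fin n → ℕ, u + w ∈ Γ

/-- The Newton polyhedron: convex hull of the exponent set. -/
def newton {n : ℕ} (Γ : Set (Fin n → ℕ)) : Set (Fin n → ℝ) :=
  convexHull ℝ (natR '' Γ)

/-- The subsemigroup (containing 0) of ℤⁿ generated by differences u - v,
u ∈ Γ, v ∈ Γ ∩ Q. -/
def diffMonoid {n : ℕ} (Γ : Set (Fin n → ℕ)) (Q : Set (Fin n → ℝ)) :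
    AddSubmonoid (Fin n → ℤ) :=
  AddSubmonoid.closure {d | ∃ u ∈ Γ, ∃ v ∈ Γ, natR v ∈ Q ∧ d = natZ u - natZ v}

/-- M_Q : the translate by e = (1,...,1) of the difference semigroup. -/
def MQ {n : ℕ} (Γ : Set (Fin n → ℕ)) (Q : Set (Fin n → ℝ)) : Set (Fin n → ℤ) :=
  {m | m - 1 ∈ diffMonoid Γ Q}

/-- M_Q^{(k)} = k·v₀ + M_Q. -/
def MQk {n : ℕ} (Γ : Set (Fin n → ℕ)) (Q : Set (Fin n → ℝ)) (v0 : Fin n → ℕ) (k : ℕ) :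
    Set (Fin n → ℤ) :=
  {m | m - (k : ℤ) • natZ v0 ∈ MQ Γ Q}

/-- V_Q : linear span of the face Q. -/
def VQ {n : ℕ} (Q : Set (Fin n → ℝ)) : Submodule ℝ (Fin n → ℝ) := Submodule.span ℝ Q

/-- R_Q = { -L_Q(u) : u ∈ (M_Q \ M_Q') ∩ V_Q }. -/
def RQ {n : ℕ} (Γ : Set (Fin n → ℕ)) (Q : Set (Fin n → ℝ)) (v0 : Fin n → ℕ)
    (L : (Fin n → ℝ) →ₗ[ℝ] ℝ) : Set ℝ :=
  {x | ∃ u ∈ MQ Γ Q \ MQk Γ Q v0 1, toR u ∈ VQ Q ∧ x = - L (toR u)}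

/-- Q is contained in some coordinate hyperplane. -/
def InCoordHyp {n : ℕ} (Q : Set (Fin n → ℝ)) : Prop := ∃ i, ∀ q ∈ Q, q i = 0

/-- The subgroup G_Q of ℤⁿ generated by differences of elements of Γ ∩ Q. -/
def diffGroup {n : ℕ} (Γ : Set (Fin n → ℕ)) (Q : Set (Fin n → ℝ)) :
    AddSubgroup (Fin n → ℤ) :=
  AddSubgroup.closure
    {d | ∃ u ∈ Γ, natR u ∈ Q ∧ ∃ v ∈ Γ, natR v ∈ Q ∧ d = natZ u - natZ v}

end BS


namespace EHelper
open BS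

variable (d a : ℕ)

def Gam : Set (Fin 2 → ℕ) := {u | d ≤ u 0 ∨ (d - a ≤ u 0 ∧ a ≤ u 1) ∨ d ≤ u 1}
def Qseg : Set (Fin 2 → ℝ) := segment ℝ ![(d : ℝ), 0] ![0, (d : ℝ)]

lemma qsum {x : Fin 2 → ℝ} (hx : x ∈ Qseg d) : x 0 + x 1 = d := by
  obtain ⟨s, t, hs, ht, hst, hxe⟩ := hx
  have h0 := congrFun hxe 0
  have h1 := congrFun hxe 1
  simp [Pi.add_apply, Pi.smul_apply, smul_eq_mul] at h0 h1
  nlinarith [h0, h1, hst]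

lemma qmem (hd : 0 < d) (p q : ℕ) (hpq : p + q = d) :
    natR ![p, q] ∈ Qseg d := by
  refine ⟨(p:ℝ)/d, (q:ℝ)/d, by positivity, by positivity, ?_, ?_⟩
  · have hd' : (d:ℝ) ≠ 0 := by positivity
    field_simp
    exact_mod_cast hpq
  · funext i
    have hd' : (d:ℝ) ≠ 0 := by positivity
    fin_cases i <;> simp [natR] <;> field_simp

end EHelper

namespace EHelper
open BS

lemma natZ_pair (p q : ℕ) : BS.natZ ![p, q] = ![(p:ℤ), (q:ℤ)] := by
  funext i; fin_cases i <;> simp [BS.natZ]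

lemma a_dvd (d a : ℕ) (had : a ≤ d) (hdvd : a ∣ d) {v : Fin 2 → ℕ}
    (hv : v ∈ Gam d a) (hq : v 0 + v 1 = d) : a ∣ v 1 := by
  rcases hv with h | ⟨h1, h2⟩ | h
  · have : v 1 = 0 := by omega
    simp [this]
  · have : v 1 = a := by omega
    simp [this]
  · have : v 1 = d := by omega
    exact this ▸ hdvd

lemma mem_upper (d a : ℕ) (hd : 2 ≤ d) (ha : 0 < a) (hdvd : a ∣ d) {w : Fin 2 → ℤ}
    (hw : w ∈ diffMonoid (Gam d a) (Qseg d)) :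
    ∃ m : ℤ, (a:ℤ) ∣ m ∧ m ≤ w 0 ∧ -(w 1) ≤ m := by
  have had : a ≤ d := Nat.le_of_dvd (by omega) hdvd
  induction hw using AddSubmonoid.closure_induction with
  | mem w hw =>
    obtain ⟨u, hu, v, hv, hvQ, rfl⟩ := hw
    have hqR := qsum d hvQ
    have hq : v 0 + v 1 = d := by
      simp only [natR] at hqR
      exact_mod_cast hqR
    have hav : a ∣ v 1 := a_dvd d a had hdvd hv hq
    have hw0 : (natZ u - natZ v) 0 = (u 0 : ℤ) - (v 0 : ℤ) := rfl
    have hw1 : (natZ u - natZ v) 1 = (u 1 : ℤ) - (v 1 : ℤ) := rfl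
    rcases hu with h | ⟨h1, h2⟩ | h
    · exact ⟨(v 1 : ℤ), Int.natCast_dvd_natCast.mpr hav,
        by rw [hw0]; omega, by rw [hw1]; omega⟩
    · exact ⟨(v 1 : ℤ) - a, dvd_sub (Int.natCast_dvd_natCast.mpr hav) dvd_rfl,
        by rw [hw0]; omega, by rw [hw1]; omega⟩
    · exact ⟨(v 1 : ℤ) - d, dvd_sub (Int.natCast_dvd_natCast.mpr hav)
        (Int.natCast_dvd_natCast.mpr hdvd),
        by rw [hw0]; omega, by rw [hw1]; omega⟩
  | zero => exact ⟨0, dvd_zero _, by simp, by simp⟩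
  | add x y hx hy ihx ihy =>
    obtain ⟨m1, hd1, h10, h11⟩ := ihx
    obtain ⟨m2, hd2', h20, h21⟩ := ihy
    exact ⟨m1 + m2, dvd_add hd1 hd2', by simp [Pi.add_apply]; omega,
      by simp [Pi.add_apply]; omega⟩

end EHelper

namespace EHelper
open BS

lemma gen_nat (d a : ℕ) (hd : 2 ≤ d) (p q : ℕ) :
    ![(p:ℤ), (q:ℤ)] ∈ diffMonoid (Gam d a) (Qseg d) := by
  apply AddSubmonoid.subset_closure
  refine ⟨![d + p, q], Or.inl (by simp), ![d, 0], Or.inl (by simp),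
    qmem d (by omega) d 0 (by omega), ?_⟩
  funext i; fin_cases i <;> simp [natZ] <;> push_cast <;> ring

lemma gen_pos (d a : ℕ) (hd : 2 ≤ d) (ha : 0 < a) (had : a ≤ d) :
    ![(a:ℤ), -(a:ℤ)] ∈ diffMonoid (Gam d a) (Qseg d) := by
  apply AddSubmonoid.subset_closure
  refine ⟨![d, 0], Or.inl (by simp), ![d - a, a],
    Or.inr (Or.inl ⟨le_refl _, le_refl _⟩),
    qmem d (by omega) (d - a) a (by omega), ?_⟩
  funext i; fin_cases i <;> simp [natZ] <;> omega

lemma gen_neg (d a : ℕ) (hd : 2 ≤ d) (ha : 0 < a) (had : a ≤ d) :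
    ![-(a:ℤ), (a:ℤ)] ∈ diffMonoid (Gam d a) (Qseg d) := by
  apply AddSubmonoid.subset_closure
  refine ⟨![d - a, a], Or.inr (Or.inl ⟨le_refl _, le_refl _⟩), ![d, 0],
    Or.inl (by simp), qmem d (by omega) d 0 (by omega), ?_⟩
  funext i; fin_cases i <;> simp [natZ] <;> omega

lemma mem_lower (d a : ℕ) (hd : 2 ≤ d) (ha : 0 < a) (hdvd : a ∣ d) (w : Fin 2 → ℤ)
    (m : ℤ) (hm : (a:ℤ) ∣ m) (h0 : m ≤ w 0) (h1 : -(w 1) ≤ m) :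
    w ∈ diffMonoid (Gam d a) (Qseg d) := by
  have had : a ≤ d := Nat.le_of_dvd (by omega) hdvd
  obtain ⟨t, rfl⟩ := hm
  have e0 : ((w 0 - a * t).toNat : ℤ) = w 0 - a * t :=
    Int.toNat_of_nonneg (by linarith)
  have e1 : ((w 1 + a * t).toNat : ℤ) = w 1 + a * t :=
    Int.toNat_of_nonneg (by linarith)
  rcases le_or_gt 0 t with ht | ht
  · have ht' : (t.toNat : ℤ) = t := Int.toNat_of_nonneg ht
    have key : w = ![((w 0 - a * t).toNat : ℤ), ((w 1 + a * t).toNat : ℤ)]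
        + t.toNat • ![(a:ℤ), -(a:ℤ)] := by
      funext i
      fin_cases i <;> simp [e0, e1, ht'] <;> ring
    rw [key]
    exact AddSubmonoid.add_mem _ (gen_nat d a hd _ _)
      (AddSubmonoid.nsmul_mem _ (gen_pos d a hd ha had) _)
  · have ht' : ((-t).toNat : ℤ) = -t := Int.toNat_of_nonneg (by omega)
    have key : w = ![((w 0 - a * t).toNat : ℤ), ((w 1 + a * t).toNat : ℤ)]
        + (-t).toNat • ![-(a:ℤ), (a:ℤ)] := by
      funext i
      fin_cases i <;> simp [e0, e1, ht'] <;> ring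
    rw [key]
    exact AddSubmonoid.add_mem _ (gen_nat d a hd _ _)
      (AddSubmonoid.nsmul_mem _ (gen_neg d a hd ha had) _)

lemma span_all (d : ℕ) (hd : 0 < d) (x : Fin 2 → ℝ) :
    x ∈ Submodule.span ℝ (Qseg d) := by
  have h1 : ![(d:ℝ), 0] ∈ Qseg d := left_mem_segment ℝ _ _
  have h2 : ![0, (d:ℝ)] ∈ Qseg d := right_mem_segment ℝ _ _
  have hd' : (d:ℝ) ≠ 0 := by positivity
  have hx : x = (x 0 / d) • ![(d:ℝ), 0] + (x 1 / d) • ![0, (d:ℝ)] := by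
    funext i
    fin_cases i <;> simp <;> field_simp
  rw [hx]
  exact Submodule.add_mem _ (Submodule.smul_mem _ _ (Submodule.subset_span h1))
    (Submodule.smul_mem _ _ (Submodule.subset_span h2))

end EHelper

/-- For a = (x^d, x^{d-a} y^a, y^d), d ≥ 2, a ∣ d, and Q the segment from (d,0) to
(0,d): with L_Q(x,y) = (x+y)/d, R_Q = {-k/d : 2 ≤ k ≤ d + a}. -/
theorem example_xd_ya (d a : ℕ) (hd : 2 ≤ d) (ha : 0 < a) (hdvd : a ∣ d)
    (L : (Fin 2 → ℝ) →ₗ[ℝ] ℝ) (hL : ∀ x, L x = (x 0 + x 1) / (d : ℝ)) :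
    BS.RQ {u : Fin 2 → ℕ | d ≤ u 0 ∨ (d - a ≤ u 0 ∧ a ≤ u 1) ∨ d ≤ u 1}
      (segment ℝ ![(d : ℝ), 0] ![0, (d : ℝ)]) ![d, 0] L =
    {x : ℝ | ∃ k : ℕ, 2 ≤ k ∧ k ≤ d + a ∧ x = -(k : ℝ) / (d : ℝ)} := by
  have had : a ≤ d := Nat.le_of_dvd (by omega) hdvd
  show BS.RQ (EHelper.Gam d a) (EHelper.Qseg d) ![d, 0] L = _
  ext x
  constructor
  · rintro ⟨u, ⟨huM, huM'⟩, -, rfl⟩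
    have huM2 : (u - 1) ∈ BS.diffMonoid (EHelper.Gam d a) (EHelper.Qseg d) := huM
    obtain ⟨m, hma, hm0, hm1⟩ := EHelper.mem_upper d a hd ha hdvd huM2
    have hw0 : (u - 1) 0 = u 0 - 1 := rfl
    have hw1 : (u - 1) 1 = u 1 - 1 := rfl
    rw [hw0] at hm0
    rw [hw1] at hm1
    have hs2 : 2 ≤ u 0 + u 1 := by omega
    have hsu : u 0 + u 1 ≤ (d : ℤ) + a := by
      by_contra hcon
      apply huM'
      show u - ((1:ℕ):ℤ) • BS.natZ ![d,0] - 1 ∈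
        BS.diffMonoid (EHelper.Gam d a) (EHelper.Qseg d)
      have hW0 : (u - ((1:ℕ):ℤ) • BS.natZ ![d,0] - 1) 0 = u 0 - d - 1 := by
        simp [EHelper.natZ_pair]
        rfl
      have hW1 : (u - ((1:ℕ):ℤ) • BS.natZ ![d,0] - 1) 1 = u 1 - 1 := by
        simp [EHelper.natZ_pair]
        rfl
      have hq := Int.mul_ediv_add_emod (u 0 - 1) (a:ℤ)
      have hr0 : 0 ≤ (u 0 - 1) % (a:ℤ) :=
        Int.emod_nonneg _ (by exact_mod_cast ha.ne')
      have hra : (u 0 - 1) % (a:ℤ) < a := Int.emod_lt_of_pos _ (by exact_mod_cast ha)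
      obtain ⟨A, hA⟩ : ∃ A : ℤ, A = (a:ℤ) * ((u 0 - 1) / a) := ⟨_, rfl⟩
      rw [← hA] at hq
      refine EHelper.mem_lower d a hd ha hdvd _ (A - d) ?_ ?_ ?_
      · exact dvd_sub (hA ▸ Dvd.intro _ rfl) (Int.natCast_dvd_natCast.mpr hdvd)
      · rw [hW0]; omega
      · rw [hW1]; omega
    refine ⟨(u 0 + u 1).toNat, by omega, by omega, ?_⟩
    rw [hL]
    have hk : (((u 0 + u 1).toNat : ℕ) : ℝ) = ((u 0 : ℤ) : ℝ) + ((u 1 : ℤ) : ℝ) := by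
      have h := Int.toNat_of_nonneg (show (0:ℤ) ≤ u 0 + u 1 by omega)
      exact_mod_cast congrArg (Int.cast : ℤ → ℝ) h
    simp only [BS.toR]
    rw [hk]
    ring
  · rintro ⟨k, hk2, hkd, rfl⟩
    rcases le_or_gt k (d + 1) with hk | hk
    · refine ⟨![(1:ℤ), (k:ℤ) - 1], ⟨?_, ?_⟩, EHelper.span_all d (by omega) _, ?_⟩
      · show ![(1:ℤ), (k:ℤ) - 1] - 1 ∈ BS.diffMonoid (EHelper.Gam d a) (EHelper.Qseg d)
        have h0 : (![(1:ℤ), (k:ℤ) - 1] - 1) 0 = 0 := by simp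
        have h1 : (![(1:ℤ), (k:ℤ) - 1] - 1) 1 = (k:ℤ) - 2 := by
          simp; ring
        refine EHelper.mem_lower d a hd ha hdvd _ 0 (dvd_zero _) (by rw [h0]) ?_
        rw [h1]; omega
      · intro hmem
        have hmem' : (![(1:ℤ), (k:ℤ) - 1] - ((1:ℕ):ℤ) • BS.natZ ![d,0]) - 1 ∈
            BS.diffMonoid (EHelper.Gam d a) (EHelper.Qseg d) := hmem
        obtain ⟨m, hma, hm0, hm1⟩ := EHelper.mem_upper d a hd ha hdvd hmem'
        have hW0 : (![(1:ℤ), (k:ℤ) - 1] - ((1:ℕ):ℤ) • BS.natZ ![d,0] - 1) 0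
            = -(d:ℤ) := by simp [EHelper.natZ_pair]
        have hW1 : (![(1:ℤ), (k:ℤ) - 1] - ((1:ℕ):ℤ) • BS.natZ ![d,0] - 1) 1
            = (k:ℤ) - 2 := by simp [EHelper.natZ_pair] <;> ring
        rw [hW0] at hm0
        rw [hW1] at hm1
        omega
      · rw [hL]
        simp only [BS.toR, Matrix.cons_val_zero, Matrix.cons_val_one, Matrix.head_cons]
        push_cast
        ring
    · refine ⟨![(d:ℤ), (k:ℤ) - d], ⟨?_, ?_⟩, EHelper.span_all d (by omega) _, ?_⟩
      · show ![(d:ℤ), (k:ℤ) - d] - 1 ∈ BS.diffMonoid (EHelper.Gam d a) (EHelper.Qseg d)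
        have h0 : (![(d:ℤ), (k:ℤ) - d] - 1) 0 = (d:ℤ) - 1 := by simp
        have h1 : (![(d:ℤ), (k:ℤ) - d] - 1) 1 = (k:ℤ) - d - 1 := by simp <;> ring
        refine EHelper.mem_lower d a hd ha hdvd _ 0 (dvd_zero _) ?_ ?_
        · rw [h0]; omega
        · rw [h1]; omega
      · intro hmem
        have hmem' : (![(d:ℤ), (k:ℤ) - d] - ((1:ℕ):ℤ) • BS.natZ ![d,0]) - 1 ∈
            BS.diffMonoid (EHelper.Gam d a) (EHelper.Qseg d) := hmem
        obtain ⟨m, hma, hm0, hm1⟩ := EHelper.mem_upper d a hd ha hdvd hmem'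
        have hW0 : (![(d:ℤ), (k:ℤ) - d] - ((1:ℕ):ℤ) • BS.natZ ![d,0] - 1) 0
            = -1 := by simp [EHelper.natZ_pair]
        have hW1 : (![(d:ℤ), (k:ℤ) - d] - ((1:ℕ):ℤ) • BS.natZ ![d,0] - 1) 1
            = (k:ℤ) - d - 1 := by simp [EHelper.natZ_pair] <;> ring
        rw [hW0] at hm0
        rw [hW1] at hm1
        obtain ⟨t, rfl⟩ := hma
        have hkd' : (k:ℤ) ≤ (d:ℤ) + a := by exact_mod_cast hkd
        rcases le_or_gt t (-1) with h | h
        · have hle : (a:ℤ) * t ≤ (a:ℤ) * (-1) :=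
            mul_le_mul_of_nonneg_left h (by positivity)
          linarith
        · have h' : (0:ℤ) ≤ t := by omega
          have : (0:ℤ) ≤ (a:ℤ) * t := mul_nonneg (by positivity) h'
          linarith
      · rw [hL]
        simp only [BS.toR, Matrix.cons_val_zero, Matrix.cons_val_one, Matrix.head_cons]
        push_cast
        ring
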